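/- Let a < b, let s ∈ (0,1), let φ : [a,b] → [a,b] be an affine continuous map with φ(a) < φ(b), let g : [a,b] → [0,∞) be φ_s-convex and Lebesgue integrable, and let f : [a,b] → [0,∞) be Lebesgue integrable and (g,φ_s)-convex dominated on [a,b] (i.e. (g,φ_h)-convex dominated with h(t) = t^s). Then |(f(φ(a)) + f(φ(b)))/(s+1) − (1/(φ(b) − φ(a))) ∫_{φ(a)}^{φ(b)} f(x) dx| ≤ (g(φ(a)) + g(φ(b)))/(s+1) − (1/(φ(b) − φ(a))) ∫_{φ(a)}^{φ(b)} g(x) dx. -/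

import Mathlib

open MeasureTheory Set
open scoped Interval

/-- `F` is `φ_h`-convex on `I`. -/
def PhiHConvexOn (I : Set ℝ) (h φ F : ℝ → ℝ) : Prop :=
  ∀ x ∈ I, ∀ y ∈ I, ∀ t ∈ Set.Ioo (0:ℝ) 1,
    F (t * φ x + (1 - t) * φ y) ≤ h t * F (φ x) + h (1 - t) * F (φ y)

/-- `f` is `(g, φ_h)`-convex dominated on `I`. -/
def GPhiHConvexDominated (I : Set ℝ) (h φ g f : ℝ → ℝ) : Prop :=
  ∀ x ∈ I, ∀ y ∈ I, ∀ t ∈ Set.Ioo (0:ℝ) 1,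
    |h t * f (φ x) + h (1 - t) * f (φ y) - f (t * φ x + (1 - t) * φ y)| ≤
      h t * g (φ x) + h (1 - t) * g (φ y) - g (t * φ x + (1 - t) * φ y)

open intervalIntegral in
theorem stmt7 (a b : ℝ) (hab : a < b) (s : ℝ) (hs : s ∈ Set.Ioo (0:ℝ) 1)
    (φ f g : ℝ → ℝ)
    (hφmaps : Set.MapsTo φ (Set.Icc a b) (Set.Icc a b))
    (hφaff : ∀ x ∈ Set.Icc a b, ∀ y ∈ Set.Icc a b, ∀ l ∈ Set.Icc (0:ℝ) 1,
      φ (l * x + (1 - l) * y) = l * φ x + (1 - l) * φ y)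
    (hφcont : ContinuousOn φ (Set.Icc a b))
    (hφab : φ a < φ b)
    (hg0 : ∀ x ∈ Set.Icc a b, 0 ≤ g x)
    (hgconv : PhiHConvexOn (Set.Icc a b) (fun t => t ^ s) φ g)
    (hgint : IntegrableOn g (Set.Icc a b))
    (hf0 : ∀ x ∈ Set.Icc a b, 0 ≤ f x)
    (hfint : IntegrableOn f (Set.Icc a b))
    (hfdom : GPhiHConvexDominated (Set.Icc a b) (fun t => t ^ s) φ g f) :
    |(f (φ a) + f (φ b)) / (s + 1) - (1 / (φ b - φ a)) * ∫ x in φ a..φ b, f x| ≤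
      (g (φ a) + g (φ b)) / (s + 1) - (1 / (φ b - φ a)) * ∫ x in φ a..φ b, g x := by
  obtain ⟨hs0, hs1⟩ := hs
  set c := φ a with hc
  set d := φ b with hd
  have ha : a ∈ Set.Icc a b := ⟨le_rfl, hab.le⟩
  have hb : b ∈ Set.Icc a b := ⟨hab.le, le_rfl⟩
  have hcmem : c ∈ Set.Icc a b := hφmaps ha
  have hdmem : d ∈ Set.Icc a b := hφmaps hb
  have hcd : c < d := hφab
  have hcd' : c - d ≠ 0 := by linarith
  have hdc' : d - c ≠ 0 := by linarith
  have hs1' : s + 1 ≠ 0 := by linarith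
  -- interval integrability of f and g on [c,d]
  have hfcd : IntervalIntegrable f volume c d :=
    (intervalIntegrable_iff_integrableOn_Icc_of_le hcd.le).mpr
      (hfint.mono_set (Set.Icc_subset_Icc hcmem.1 hdmem.2))
  have hgcd : IntervalIntegrable g volume c d :=
    (intervalIntegrable_iff_integrableOn_Icc_of_le hcd.le).mpr
      (hgint.mono_set (Set.Icc_subset_Icc hcmem.1 hdmem.2))
  -- interval integrability of building blocks on [0,1]
  have h1 : IntervalIntegrable (fun t : ℝ => t ^ s) volume 0 1 :=
    intervalIntegrable_rpow' (by linarith)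
  have h2 : IntervalIntegrable (fun t : ℝ => (1 - t) ^ s) volume 0 1 := by
    have := h1.comp_sub_left 1
    simpa using this.symm
  have hcomp : ∀ u : ℝ → ℝ, IntervalIntegrable u volume c d →
      IntervalIntegrable (fun t => u ((c - d) * t + d)) volume 0 1 := by
    intro u hu
    have h3 := (hu.comp_add_right d).comp_mul_left (c := c - d)
    have e1 : (c - d) / (c - d) = (1 : ℝ) := div_self hcd'
    have e2 : (d - d) / (c - d) = (0 : ℝ) := by simp
    rw [e1, e2] at h3
    exact h3.symm
  have hFf : IntervalIntegrable
      (fun t : ℝ => t ^ s * f c + (1 - t) ^ s * f d - f ((c - d) * t + d)) volume 0 1 :=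
    ((h1.mul_const (f c)).add (h2.mul_const (f d))).sub (hcomp f hfcd)
  have hFg : IntervalIntegrable
      (fun t : ℝ => t ^ s * g c + (1 - t) ^ s * g d - g ((c - d) * t + d)) volume 0 1 :=
    ((h1.mul_const (g c)).add (h2.mul_const (g d))).sub (hcomp g hgcd)
  -- basic integral computations
  have I1 : (∫ t in (0:ℝ)..1, t ^ s) = 1 / (s + 1) := by
    rw [integral_rpow (Or.inl (by linarith))]
    rw [Real.one_rpow, Real.zero_rpow hs1']
    norm_num
  have I2 : (∫ t in (0:ℝ)..1, (1 - t) ^ s) = 1 / (s + 1) := by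
    have := integral_comp_sub_left (fun u : ℝ => u ^ s) 1 (a := 0) (b := 1)
    simpa [I1] using this
  have I3 : ∀ u : ℝ → ℝ, IntervalIntegrable u volume c d →
      (∫ t in (0:ℝ)..1, u ((c - d) * t + d)) = (1 / (d - c)) * ∫ x in c..d, u x := by
    intro u hu
    have h3 := integral_comp_mul_add u hcd' d (a := 0) (b := 1)
    have e1 : (c - d) * 0 + d = d := by ring
    have e2 : (c - d) * 1 + d = c := by ring
    rw [e1, e2, integral_symm c d] at h3
    rw [h3, smul_eq_mul]
    field_simp
    ring
  -- value of the f-integral and the g-integral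
  have hval : ∀ u : ℝ → ℝ, IntervalIntegrable u volume c d →
      (∫ t in (0:ℝ)..1, (t ^ s * u c + (1 - t) ^ s * u d - u ((c - d) * t + d)))
        = (u c + u d) / (s + 1) - (1 / (d - c)) * ∫ x in c..d, u x := by
    intro u hu
    rw [integral_sub ((h1.mul_const (u c)).add (h2.mul_const (u d))) (hcomp u hu),
      integral_add (h1.mul_const (u c)) (h2.mul_const (u d)),
      intervalIntegral.integral_mul_const, intervalIntegral.integral_mul_const,
      I1, I2, I3 u hu]
    ring
  -- pointwise inequality on [0,1]
  have hpt : ∀ t ∈ Set.Icc (0:ℝ) 1,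
      |t ^ s * f c + (1 - t) ^ s * f d - f ((c - d) * t + d)| ≤
        t ^ s * g c + (1 - t) ^ s * g d - g ((c - d) * t + d) := by
    intro t ⟨ht0, ht1⟩
    rcases eq_or_lt_of_le ht0 with h0 | h0
    · have : t = 0 := h0.symm
      subst this
      simp [Real.zero_rpow hs0.ne']
    rcases eq_or_lt_of_le ht1 with h1' | h1'
    · subst h1'
      have e : (c - d) * 1 + d = c := by ring
      simp [e, Real.zero_rpow hs0.ne']
    have := hfdom a ha b hb t ⟨h0, h1'⟩
    have e : t * φ a + (1 - t) * φ b = (c - d) * t + d := by rw [← hc, ← hd]; ring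
    simpa [e] using this
  -- put everything together
  calc |(f c + f d) / (s + 1) - (1 / (d - c)) * ∫ x in c..d, f x|
      = |∫ t in (0:ℝ)..1, (t ^ s * f c + (1 - t) ^ s * f d - f ((c - d) * t + d))| := by
        rw [hval f hfcd]
    _ ≤ ∫ t in (0:ℝ)..1, |t ^ s * f c + (1 - t) ^ s * f d - f ((c - d) * t + d)| :=
        abs_integral_le_integral_abs zero_le_one
    _ ≤ ∫ t in (0:ℝ)..1, (t ^ s * g c + (1 - t) ^ s * g d - g ((c - d) * t + d)) :=
        integral_mono_on zero_le_one hFf.abs hFg hpt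
    _ = (g c + g d) / (s + 1) - (1 / (d - c)) * ∫ x in c..d, g x := hval g hgcd
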